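/- Fix a > 0 and define g(u) = ( φ(−a−u) − φ(a−u) ) / ( Φ(a−u) − Φ(−a−u) ). Then for every real x and every k > 0, g(x−k) − g(x) ≤ k. (This follows because g'(u) equals the Fisher information of the truncated Gaussian N^T(u,1,[−a,a]) minus 1, which is at least −1.) -/

import Mathlib

open MeasureTheory Real Filter

/-- Standard Gaussian density. -/
noncomputable def phi (x : ℝ) : ℝ := (Real.sqrt (2 * Real.pi))⁻¹ * Real.exp (-(x ^ 2) / 2)

/-- Standard Gaussian cumulative distribution function. -/
noncomputable def Phi (x : ℝ) : ℝ := ∫ t in Set.Iic x, phi t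

/-- Score-difference function of the unit-variance truncated Gaussian. -/
noncomputable def g (a u : ℝ) : ℝ := (phi (-a - u) - phi (a - u)) / (Phi (a - u) - Phi (-a - u))

lemma phi_pos (x : ℝ) : 0 < phi x := by
  unfold phi
  positivity

lemma phi_cont : Continuous phi := by
  unfold phi
  continuity

lemma phi_integrable : Integrable phi := by
  have h : Integrable (fun x : ℝ => Real.exp (-(2⁻¹ : ℝ) * x ^ 2)) :=
    integrable_exp_neg_mul_sq (by norm_num)
  have : phi = fun x => (Real.sqrt (2 * Real.pi))⁻¹ * Real.exp (-(2⁻¹ : ℝ) * x ^ 2) := by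
    funext x; unfold phi; ring_nf
  rw [this]
  exact h.const_mul _

lemma hasDerivAt_phi (x : ℝ) : HasDerivAt phi (-x * phi x) x := by
  have h1 : HasDerivAt (fun t : ℝ => -(t ^ 2) / 2) (-x) x := by
    have := ((hasDerivAt_pow 2 x).neg).div_const 2
    simpa using this.congr_deriv (by ring)
  have h2 := (h1.exp).const_mul ((Real.sqrt (2 * Real.pi))⁻¹)
  have h3 : HasDerivAt phi ((Real.sqrt (2 * Real.pi))⁻¹ * (Real.exp (-(x ^ 2) / 2) * -x)) x := h2
  have h4 : -x * phi x = (Real.sqrt (2 * Real.pi))⁻¹ * (Real.exp (-(x ^ 2) / 2) * -x) := by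
    unfold phi; ring
  rw [h4]; exact h3

lemma Phi_sub (c b : ℝ) : Phi b - Phi c = ∫ t in c..b, phi t := by
  unfold Phi
  exact intervalIntegral.integral_Iic_sub_Iic phi_integrable.integrableOn
    phi_integrable.integrableOn

lemma hasDerivAt_Phi (x : ℝ) : HasDerivAt Phi (phi x) x := by
  have key : HasDerivAt (fun u => ∫ t in (0:ℝ)..u, phi t) (phi x) x :=
    intervalIntegral.integral_hasDerivAt_right
      (phi_integrable.intervalIntegrable)
      (phi_cont.stronglyMeasurableAtFilter _ _)
      phi_cont.continuousAt
  have hP : Phi = fun u => Phi 0 + ∫ t in (0:ℝ)..u, phi t := by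
    funext u
    have := Phi_sub 0 u
    linarith
  rw [hP]
  simpa using (key.const_add (Phi 0))

lemma D_pos {c b : ℝ} (h : c < b) : 0 < Phi b - Phi c := by
  rw [Phi_sub]
  apply intervalIntegral.intervalIntegral_pos_of_pos_on
    phi_integrable.intervalIntegrable (fun x _ => phi_pos x) h

/-- Key Cauchy–Schwarz / variance inequality. -/
lemma key_ineq {c b : ℝ} (h : c < b) :
    (phi c - phi b) ^ 2 ≤
      (Phi b - Phi c) * ((c * phi c - b * phi b) + (Phi b - Phi c)) := by
  set S0 : ℝ := ∫ t in c..b, phi t with hS0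
  set S1 : ℝ := ∫ t in c..b, t * phi t with hS1
  set S2 : ℝ := ∫ t in c..b, t ^ 2 * phi t with hS2
  have hD : Phi b - Phi c = S0 := Phi_sub c b
  have hcont1 : Continuous fun t : ℝ => t * phi t := continuous_id.mul phi_cont
  have hcont2 : Continuous fun t : ℝ => t ^ 2 * phi t := (continuous_pow 2).mul phi_cont
  -- S1 = phi c - phi b
  have h1 : S1 = phi c - phi b := by
    have hd : ∀ t ∈ Set.uIcc c b, HasDerivAt (fun s => -phi s) (t * phi t) t := by
      intro t _
      have := (hasDerivAt_phi t).neg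
      exact this.congr_deriv (by ring)
    rw [hS1, intervalIntegral.integral_eq_sub_of_hasDerivAt hd
      (hcont1.intervalIntegrable _ _)]
    ring
  -- S2 = S0 + c * phi c - b * phi b
  have h2 : S2 = S0 + (c * phi c - b * phi b) := by
    have hd : ∀ t ∈ Set.uIcc c b, HasDerivAt (fun s => -(s * phi s)) (t ^ 2 * phi t - phi t) t := by
      intro t _
      have := ((hasDerivAt_id t).mul (hasDerivAt_phi t)).neg
      exact this.congr_deriv (by simp only [id_eq]; ring)
    have := intervalIntegral.integral_eq_sub_of_hasDerivAt hd
      ((hcont2.sub phi_cont).intervalIntegrable _ _)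
    rw [intervalIntegral.integral_sub (hcont2.intervalIntegrable _ _)
      phi_integrable.intervalIntegrable, ← hS2, ← hS0] at this
    linarith
  have hS0pos : 0 < S0 := by rw [← hD]; exact D_pos h
  -- variance nonnegativity
  have hvar : 0 ≤ S0 ^ 2 * S2 - 2 * S0 * S1 * S1 + S1 ^ 2 * S0 := by
    have hnn : 0 ≤ ∫ t in c..b, (S0 * t - S1) ^ 2 * phi t :=
      intervalIntegral.integral_nonneg h.le
        (fun t _ => mul_nonneg (sq_nonneg _) (phi_pos t).le)
    have hexp : (fun t : ℝ => (S0 * t - S1) ^ 2 * phi t) =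
        fun t : ℝ => S0 ^ 2 * (t ^ 2 * phi t) - (2 * S0 * S1) * (t * phi t) + S1 ^ 2 * phi t := by
      funext t; ring
    rw [hexp] at hnn
    rw [intervalIntegral.integral_add (f := fun t => S0 ^ 2 * (t ^ 2 * phi t) - (2 * S0 * S1) * (t * phi t)) (g := fun t => S1 ^ 2 * phi t) (((continuous_const.mul hcont2).sub (continuous_const.mul hcont1)).intervalIntegrable _ _)
        ((continuous_const.mul phi_cont).intervalIntegrable _ _),
      intervalIntegral.integral_sub (f := fun t => S0 ^ 2 * (t ^ 2 * phi t)) (g := fun t => (2 * S0 * S1) * (t * phi t)) ((continuous_const.mul hcont2).intervalIntegrable _ _)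
        ((continuous_const.mul hcont1).intervalIntegrable _ _),
      intervalIntegral.integral_const_mul, intervalIntegral.integral_const_mul,
      intervalIntegral.integral_const_mul, ← hS0, ← hS1, ← hS2] at hnn
    nlinarith [hnn]
  have hcs : S1 ^ 2 ≤ S0 * S2 := by nlinarith [hS0pos, hvar]
  rw [hD, h1.symm]
  nlinarith [hcs, h2, hS0pos]

lemma hasDerivAt_phi_comp (c u : ℝ) :
    HasDerivAt (fun u => phi (c - u)) ((c - u) * phi (c - u)) u := by
  have hin : HasDerivAt (fun u : ℝ => c - u) (-1) u := by
    simpa using (hasDerivAt_id u).const_sub c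
  have := (hasDerivAt_phi (c - u)).comp u hin
  exact this.congr_deriv (by ring)

lemma hasDerivAt_Phi_comp (c u : ℝ) :
    HasDerivAt (fun u => Phi (c - u)) (-phi (c - u)) u := by
  have hin : HasDerivAt (fun u : ℝ => c - u) (-1) u := by
    simpa using (hasDerivAt_id u).const_sub c
  have := (hasDerivAt_Phi (c - u)).comp u hin
  exact this.congr_deriv (by ring)

/-- The score-difference function `g` satisfies `g(x−k) − g(x) ≤ k` for `k > 0`. -/
theorem g_diff_le (a : ℝ) (ha : 0 < a) :
    ∀ x k : ℝ, 0 < k → g a (x - k) - g a x ≤ k := by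
  have hder : ∀ u : ℝ, HasDerivAt (fun u => g a u + u)
      ((((-a - u) * phi (-a - u) - (a - u) * phi (a - u)) * (Phi (a - u) - Phi (-a - u))
        - (phi (-a - u) - phi (a - u)) * (phi (-a - u) - phi (a - u)))
        / (Phi (a - u) - Phi (-a - u)) ^ 2 + 1) u := by
    intro u
    have hc : -a - u < a - u := by linarith
    have hDne : Phi (a - u) - Phi (-a - u) ≠ 0 := (D_pos hc).ne'
    have hN : HasDerivAt (fun u => phi (-a - u) - phi (a - u))
        ((-a - u) * phi (-a - u) - (a - u) * phi (a - u)) u :=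
      (hasDerivAt_phi_comp (-a) u).sub (hasDerivAt_phi_comp a u)
    have hD : HasDerivAt (fun u => Phi (a - u) - Phi (-a - u))
        (-phi (a - u) - -phi (-a - u)) u :=
      (hasDerivAt_Phi_comp a u).sub (hasDerivAt_Phi_comp (-a) u)
    have hg := hN.div hD hDne
    have hgu : HasDerivAt (fun u => g a u)
        ((((-a - u) * phi (-a - u) - (a - u) * phi (a - u)) * (Phi (a - u) - Phi (-a - u))
          - (phi (-a - u) - phi (a - u)) * (phi (-a - u) - phi (a - u)))
          / (Phi (a - u) - Phi (-a - u)) ^ 2) u := by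
      unfold g
      exact hg.congr_deriv (by ring)
    exact hgu.add (hasDerivAt_id u)
  have hmono : Monotone (fun u => g a u + u) := by
    apply monotone_of_deriv_nonneg (fun u => (hder u).differentiableAt)
    intro u
    rw [(hder u).deriv]
    have hc : -a - u < a - u := by linarith
    have hDpos := D_pos hc
    have hk := key_ineq hc
    set N : ℝ := phi (-a - u) - phi (a - u)
    set N' : ℝ := (-a - u) * phi (-a - u) - (a - u) * phi (a - u)
    set D : ℝ := Phi (a - u) - Phi (-a - u)
    have hkey : N * N ≤ D * (N' + D) := by nlinarith [hk]
    have heq : (N' * D - N * N) / D ^ 2 + 1 = (N' * D - N * N + D ^ 2) / D ^ 2 := by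
      field_simp
    rw [heq]
    apply div_nonneg _ (sq_nonneg D)
    nlinarith [hkey]
  intro x k hk
  have := hmono (show x - k ≤ x by linarith)
  simp only at this
  linarith
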